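/- If hypothetical samples x_i are i.i.d. draws from the conjugate posterior predictive distribution (i.e., E[x̄_m] = μ_n = w_n ȳ_n + (1-w_n)μ₀ and Var(x̄_m) = (σ² + σ²/(n+z))/m), then the expected KL divergence E[KL(π_n^c, π_m^f)] = (1/2){ m/(n+z) + (m/σ²)E[D_{m,n}] - 1 + log((n+z)/m) } has derivative in m equal to (1/2){1/(n+z) - 1/m} and is minimized at m = n + z. -/

import Mathlib

open Real

/-- posterior predictive hypothetical sampling: with
`E[D_{m,n}] = (σ² + σ²/(n+z))/m`, the expected KL divergence
`F(m) = (1/2){ m/(n+z) + (m/σ²)·E[D_{m,n}] - 1 + log((n+z)/m) }` has derivative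
`(1/2){1/(n+z) - 1/m}` at each `m > 0` and is minimized over `m > 0` at `m = n+z`. -/
theorem stmt_14 (n z σ : ℝ) (hn : 0 < n) (hz : 0 < z) (hσ : 0 < σ)
    (F : ℝ → ℝ)
    (hF : ∀ m, F m = (1 / 2) * (m / (n + z)
      + (m / σ ^ 2) * ((σ ^ 2 + σ ^ 2 / (n + z)) / m) - 1 + Real.log ((n + z) / m))) :
    (∀ m, 0 < m → HasDerivAt F ((1 / 2) * (1 / (n + z) - 1 / m)) m) ∧
    (∀ m, 0 < m → F (n + z) ≤ F m) := by
  have hnz : 0 < n + z := by linarith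
  have hσ2 : (σ : ℝ) ^ 2 ≠ 0 := by positivity
  have hFeq : ∀ m : ℝ, 0 < m → F m =
      (1 / 2) * (m / (n + z) + (1 + 1 / (n + z)) - 1 + (Real.log (n + z) - Real.log m)) := by
    intro m hm
    rw [hF m, Real.log_div (ne_of_gt hnz) (ne_of_gt hm)]
    have : (m / σ ^ 2) * ((σ ^ 2 + σ ^ 2 / (n + z)) / m) = 1 + 1 / (n + z) := by
      field_simp
    rw [this]
  constructor
  · intro m hm
    have hG : HasDerivAt (fun x : ℝ =>
        (1 / 2) * (x / (n + z) + (1 + 1 / (n + z)) - 1 + (Real.log (n + z) - Real.log x)))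
        ((1 / 2) * (1 / (n + z) - 1 / m)) m := by
      have h1 : HasDerivAt (fun x : ℝ => x / (n + z)) (1 / (n + z)) m := by
        simpa using (hasDerivAt_id m).div_const (n + z)
      have h2 : HasDerivAt (fun x : ℝ => Real.log (n + z) - Real.log x) (0 - m⁻¹) m :=
        (hasDerivAt_const m (Real.log (n + z))).sub (Real.hasDerivAt_log (ne_of_gt hm))
      have := (((h1.add_const (1 + 1 / (n + z))).sub_const 1).add h2).const_mul (1 / 2)
      convert this using 1
      exacts [rfl, rfl, rfl, by ring]
    refine hG.congr_of_eventuallyEq ?_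
    filter_upwards [eventually_gt_nhds hm] with x hx
    exact hFeq x hx
  · intro m hm
    rw [hFeq m hm, hFeq (n + z) hnz]
    have hlog : Real.log (m / (n + z)) ≤ m / (n + z) - 1 :=
      Real.log_le_sub_one_of_pos (by positivity)
    rw [Real.log_div (ne_of_gt hm) (ne_of_gt hnz)] at hlog
    have : (n + z) / (n + z) = 1 := div_self (ne_of_gt hnz)
    nlinarith [hlog]
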